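/- Fix N ≥ 2. If a 2^N×2^N complex matrix A commutes with each of the five matrices H_S, σ₊^{(1)}, σ₋^{(1)}, σ₊^{(N)}, σ₋^{(N)}, then A is a scalar multiple of the identity: there exists λ ∈ ℂ with A = λI. -/

import Mathlib

open Matrix Complex Filter
open scoped Kronecker Topology ComplexOrder

noncomputable section

/-- The `N`-spin configuration space index: `(ℂ²)^{⊗N}` is identified with
functions `Fin N → Fin 2 → ℂ`, so `2^N × 2^N` matrices are indexed by `Fin N → Fin 2`. -/
abbrev Spin (N : ℕ) := Fin N → Fin 2

def sx : Matrix (Fin 2) (Fin 2) ℂ := !![0, 1; 1, 0]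
def sy : Matrix (Fin 2) (Fin 2) ℂ := !![0, -Complex.I; Complex.I, 0]
def sz : Matrix (Fin 2) (Fin 2) ℂ := !![1, 0; 0, -1]
def sp : Matrix (Fin 2) (Fin 2) ℂ := !![0, 1; 0, 0]
def sm : Matrix (Fin 2) (Fin 2) ℂ := !![0, 0; 1, 0]
def np : Matrix (Fin 2) (Fin 2) ℂ := !![1, 0; 0, 0]
def nm : Matrix (Fin 2) (Fin 2) ℂ := !![0, 0; 0, 1]

/-- `M^{(k)} = I ⊗ ... ⊗ M ⊗ ... ⊗ I`: the 2×2 matrix `M` acting at site `k`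
of the chain, under the iterated Kronecker identification. -/
def site {N : ℕ} (k : Fin N) (M : Matrix (Fin 2) (Fin 2) ℂ) :
    Matrix (Spin N) (Spin N) ℂ :=
  Matrix.of fun x y => ∏ j : Fin N, if j = k then M (x j) (y j) else if x j = y j then 1 else 0

/-- The XY spin-chain Hamiltonian
`H_S = Σ_{k=1}^N σz^{(k)} + Σ_{k=1}^{N-1} (σx^{(k)}σx^{(k+1)} + σy^{(k)}σy^{(k+1)})`. -/
def HS (N : ℕ) : Matrix (Spin N) (Spin N) ℂ :=
  (∑ k : Fin N, site k sz) +
    ∑ k : Fin N, ∑ l : Fin N,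
      if (l : ℕ) = (k : ℕ) + 1 then site k sx * site l sx + site k sy * site l sy else 0

/-- `β₀ = e^{-β}/(e^{-β}+e^{β})`. -/
def b0 (β : ℝ) : ℝ := Real.exp (-β) / (Real.exp (-β) + Real.exp β)

/-- `β₁ = e^{β}/(e^{-β}+e^{β})`. -/
def b1 (β : ℝ) : ℝ := Real.exp β / (Real.exp (-β) + Real.exp β)

/-- The single-spin Gibbs state `ρ_β = diag(β₀, β₁)`. -/
def rhoB (β : ℝ) : Matrix (Fin 2) (Fin 2) ℂ := !![(b0 β : ℂ), 0; 0, (b1 β : ℂ)]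

/-- Heisenberg-picture dissipator at site `k`, inverse temperature `β`:
`2β₀(2σ₋^{(k)}Xσ₊^{(k)} − {n₋^{(k)},X}) + 2β₁(2σ₊^{(k)}Xσ₋^{(k)} − {n₊^{(k)},X})`. -/
def dissAt {N : ℕ} (k : Fin N) (β : ℝ) (X : Matrix (Spin N) (Spin N) ℂ) :
    Matrix (Spin N) (Spin N) ℂ :=
  (2 * b0 β : ℂ) • (2 • (site k sm * X * site k sp) - (site k nm * X + X * site k nm)) +
    (2 * b1 β : ℂ) • (2 • (site k sp * X * site k sm) - (site k np * X + X * site k np))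

/-- Schrödinger-picture (adjoint) dissipator at site `k`:
`2β₀(2σ₊^{(k)}ρσ₋^{(k)} − {n₋^{(k)},ρ}) + 2β₁(2σ₋^{(k)}ρσ₊^{(k)} − {n₊^{(k)},ρ})`. -/
def dissStarAt {N : ℕ} (k : Fin N) (β : ℝ) (ρ : Matrix (Spin N) (Spin N) ℂ) :
    Matrix (Spin N) (Spin N) ℂ :=
  (2 * b0 β : ℂ) • (2 • (site k sp * ρ * site k sm) - (site k nm * ρ + ρ * site k nm)) +
    (2 * b1 β : ℂ) • (2 • (site k sm * ρ * site k sp) - (site k np * ρ + ρ * site k np))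

/-- The two-bath Lindblad generator (Heisenberg picture), baths at sites `k` and `l`. -/
def Ltwo {N : ℕ} (k l : Fin N) (β β' : ℝ) (X : Matrix (Spin N) (Spin N) ℂ) :
    Matrix (Spin N) (Spin N) ℂ :=
  Complex.I • (HS N * X - X * HS N) + dissAt k β X + dissAt l β' X

/-- The two-bath adjoint Lindblad generator, baths at sites `k` and `l`. -/
def LtwoStar {N : ℕ} (k l : Fin N) (β β' : ℝ) (ρ : Matrix (Spin N) (Spin N) ℂ) :
    Matrix (Spin N) (Spin N) ℂ :=
  (-Complex.I) • (HS N * ρ - ρ * HS N) + dissStarAt k β ρ + dissStarAt l β' ρ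

/-- The `N`-fold Kronecker product `ρ_β ⊗ ... ⊗ ρ_β` under the iterated-Kronecker
identification. -/
def prodState (N : ℕ) (β : ℝ) : Matrix (Spin N) (Spin N) ℂ :=
  Matrix.of fun x y => ∏ j : Fin N, rhoB β (x j) (y j)

/-- A density matrix: Hermitian positive semidefinite with trace 1. -/
def IsDensityMatrix {n : Type*} [Fintype n] [DecidableEq n] (ρ : Matrix n n ℂ) : Prop :=
  ρ.IsHermitian ∧ ρ.PosSemidef ∧ ρ.trace = 1


namespace CommutantAux

variable {N : ℕ}

/-- General elementary tensor of `2×2` matrices. -/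
def kron (f : Fin N → Matrix (Fin 2) (Fin 2) ℂ) : Matrix (Spin N) (Spin N) ℂ :=
  Matrix.of fun x y => ∏ j, f j (x j) (y j)

lemma kron_apply (f : Fin N → Matrix (Fin 2) (Fin 2) ℂ) (x y : Spin N) :
    kron f x y = ∏ j, f j (x j) (y j) := rfl

lemma kron_mul (f g : Fin N → Matrix (Fin 2) (Fin 2) ℂ) :
    kron f * kron g = kron fun j => f j * g j := by
  ext x y
  calc (kron f * kron g) x y
      = ∑ z : Spin N, ∏ j, (f j (x j) (z j) * g j (z j) (y j)) := by
        simp [Matrix.mul_apply, kron_apply, Finset.prod_mul_distrib]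
    _ = ∏ j, ∑ a : Fin 2, f j (x j) a * g j a (y j) := by
        rw [Finset.prod_univ_sum, Fintype.piFinset_univ]
    _ = kron (fun j => f j * g j) x y := by
        simp [kron_apply, Matrix.mul_apply]

lemma kron_one : kron (fun _ : Fin N => (1 : Matrix (Fin 2) (Fin 2) ℂ)) = 1 := by
  ext x y
  rw [kron_apply, Matrix.one_apply]
  by_cases h : x = y
  · subst h; simp [Matrix.one_apply]
  · rw [if_neg h]
    obtain ⟨j, hj⟩ := Function.ne_iff.mp h
    exact Finset.prod_eq_zero (Finset.mem_univ j) (by simp [Matrix.one_apply, hj])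

lemma site_eq_kron (k : Fin N) (M : Matrix (Fin 2) (Fin 2) ℂ) :
    site k M = kron (fun j => if j = k then M else 1) := by
  ext x y
  simp only [site, kron, Matrix.of_apply]
  refine Finset.prod_congr rfl fun j _ => ?_
  by_cases h : j = k <;> simp [h, Matrix.one_apply]

lemma site_mul_same (k : Fin N) (M M' : Matrix (Fin 2) (Fin 2) ℂ) :
    site k M * site k M' = site k (M * M') := by
  rw [site_eq_kron, site_eq_kron, kron_mul, site_eq_kron]
  refine congrArg kron (funext fun j => ?_)
  by_cases h : j = k <;> simp [h]

lemma site_one (k : Fin N) : site k (1 : Matrix (Fin 2) (Fin 2) ℂ) = 1 := by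
  rw [site_eq_kron, show (fun j => if j = k then (1 : Matrix (Fin 2) (Fin 2) ℂ) else 1)
      = fun _ : Fin N => (1 : Matrix (Fin 2) (Fin 2) ℂ) from funext fun j => by split <;> rfl]
  exact kron_one

lemma site_comm {k l : Fin N} (h : k ≠ l) (M M' : Matrix (Fin 2) (Fin 2) ℂ) :
    site k M * site l M' = site l M' * site k M := by
  rw [site_eq_kron, site_eq_kron, kron_mul, kron_mul]
  refine congrArg kron (funext fun j => ?_)
  by_cases hk : j = k
  · have hl : ¬ j = l := fun hl => h (hk ▸ hl)
    simp [hk, hl, h, Ne.symm h]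
  · by_cases hl : j = l <;> simp [hk, hl, h, Ne.symm h]

lemma site_apply' (k : Fin N) (M : Matrix (Fin 2) (Fin 2) ℂ) (x y : Spin N) :
    site k M x y
      = M (x k) (y k) * ∏ j ∈ Finset.univ.erase k, (if x j = y j then (1:ℂ) else 0) := by
  simp only [site, Matrix.of_apply]
  rw [← Finset.mul_prod_erase _ _ (Finset.mem_univ k), if_pos rfl]
  congr 1
  refine Finset.prod_congr rfl fun j hj => ?_
  rw [if_neg (Finset.ne_of_mem_erase hj)]

lemma site_smul (k : Fin N) (c : ℂ) (M : Matrix (Fin 2) (Fin 2) ℂ) :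
    site k (c • M) = c • site k M := by
  ext x y
  simp [site_apply', mul_assoc]

lemma site_add (k : Fin N) (M M' : Matrix (Fin 2) (Fin 2) ℂ) :
    site k (M + M') = site k M + site k M' := by
  ext x y
  simp [site_apply', add_mul]

lemma site_sub (k : Fin N) (M M' : Matrix (Fin 2) (Fin 2) ℂ) :
    site k (M - M') = site k M - site k M' := by
  ext x y
  simp [site_apply', sub_mul]

lemma site_mul_site {k l : Fin N} (h : k ≠ l) (X Y : Matrix (Fin 2) (Fin 2) ℂ) :
    site k X * site l Y = kron (fun j => if j = k then X else if j = l then Y else 1) := by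
  rw [site_eq_kron, site_eq_kron, kron_mul]
  refine congrArg kron (funext fun j => ?_)
  by_cases hk : j = k
  · have hl : ¬ j = l := fun hl => h (hk ▸ hl)
    simp [hk, hl, h, Ne.symm h]
  · by_cases hl : j = l <;> simp [hk, hl, h, Ne.symm h]

lemma site_mul_site_apply {k l : Fin N} (h : k ≠ l) (X Y : Matrix (Fin 2) (Fin 2) ℂ)
    (x y : Spin N) :
    (site k X * site l Y) x y
      = X (x k) (y k) * Y (x l) (y l) *
          ∏ j ∈ (Finset.univ.erase k).erase l, (if x j = y j then (1:ℂ) else 0) := by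
  rw [site_mul_site h, kron_apply]
  rw [← Finset.mul_prod_erase _ _ (Finset.mem_univ k), if_pos rfl]
  have hl : l ∈ Finset.univ.erase k := Finset.mem_erase.2 ⟨fun hh => h hh.symm, Finset.mem_univ l⟩
  rw [← Finset.mul_prod_erase _ _ hl, if_neg (fun hh => h hh.symm), if_pos rfl, ← mul_assoc]
  congr 1
  refine Finset.prod_congr rfl fun j hj => ?_
  have hj2 := Finset.mem_erase.1 hj
  have hj3 := Finset.mem_erase.1 hj2.2
  rw [if_neg hj3.1, if_neg hj2.1, Matrix.one_apply]

lemma two_site_linear {k l : Fin N} (h : k ≠ l)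
    (P Q P' Q' P'' Q'' : Matrix (Fin 2) (Fin 2) ℂ)
    (hid : ∀ a b c d, P a b * Q c d + P' a b * Q' c d = P'' a b * Q'' c d) :
    site k P * site l Q + site k P' * site l Q' = site k P'' * site l Q'' := by
  ext x y
  simp only [Matrix.add_apply, site_mul_site_apply h]
  linear_combination (∏ j ∈ (Finset.univ.erase k).erase l, (if x j = y j then (1:ℂ) else 0)) *
    hid (x k) (y k) (x l) (y l)

lemma comm_two_one {k l : Fin N} (h : l ≠ k) (X Y Z : Matrix (Fin 2) (Fin 2) ℂ) :
    (site k X * site l Y) * site k Z - site k Z * (site k X * site l Y)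
      = site k (X * Z - Z * X) * site l Y := by
  have h1 : site l Y * site k Z = site k Z * site l Y := site_comm h Y Z
  have e1 : site k X * site l Y * site k Z = site k (X * Z) * site l Y := by
    rw [mul_assoc, h1, ← mul_assoc, site_mul_same]
  have e2 : site k Z * (site k X * site l Y) = site k (Z * X) * site l Y := by
    rw [← mul_assoc, site_mul_same]
  rw [e1, e2, site_sub, sub_mul]

lemma comm_one_two {j k : Fin N} (h : k ≠ j) (X Y Z : Matrix (Fin 2) (Fin 2) ℂ) :
    (site j X * site k Y) * site k Z - site k Z * (site j X * site k Y)
      = site j X * site k (Y * Z - Z * Y) := by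
  have h1 : site k Z * site j X = site j X * site k Z := site_comm h Z X
  have e1 : site j X * site k Y * site k Z = site j X * site k (Y * Z) := by
    rw [mul_assoc, site_mul_same]
  have e2 : site k Z * (site j X * site k Y) = site j X * site k (Z * Y) := by
    rw [← mul_assoc, h1, mul_assoc, site_mul_same]
  rw [e1, e2, site_sub, mul_sub]

lemma sp_mul_sm : sp * sm = np := by
  ext i j; fin_cases i <;> fin_cases j <;>
    simp [sp, sm, np, Matrix.mul_apply, Fin.sum_univ_two]

lemma sm_mul_sp : sm * sp = nm := by
  ext i j; fin_cases i <;> fin_cases j <;>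
    simp [sp, sm, nm, Matrix.mul_apply, Fin.sum_univ_two]

lemma sz_mul_sz : sz * sz = 1 := by
  ext i j; fin_cases i <;> fin_cases j <;>
    simp [sz, Matrix.mul_apply, Fin.sum_univ_two, Matrix.one_apply]

lemma hid_sp : ∀ a b c d : Fin 2,
    (sx * sp - sp * sx) a b * sx c d + (sy * sp - sp * sy) a b * sy c d
      = sz a b * ((-2 : ℂ) • sp) c d := by
  intro a b c d
  fin_cases a <;> fin_cases b <;> fin_cases c <;> fin_cases d <;>
    simp [sx, sy, sz, sp, Matrix.mul_apply, Fin.sum_univ_two, Matrix.sub_apply,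
      Matrix.smul_apply, smul_eq_mul] <;> ring

lemma hid_sm : ∀ a b c d : Fin 2,
    (sx * sm - sm * sx) a b * sx c d + (sy * sm - sm * sy) a b * sy c d
      = sz a b * ((2 : ℂ) • sm) c d := by
  intro a b c d
  fin_cases a <;> fin_cases b <;> fin_cases c <;> fin_cases d <;>
    simp [sx, sy, sz, sm, Matrix.mul_apply, Fin.sum_univ_two, Matrix.sub_apply,
      Matrix.smul_apply, smul_eq_mul] <;> ring

lemma commute_all {A : Matrix (Spin N) (Spin N) ℂ} {k : Fin N}
    (hp : Commute A (site k sp)) (hm : Commute A (site k sm))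
    (M : Matrix (Fin 2) (Fin 2) ℂ) : Commute A (site k M) := by
  have hnp : Commute A (site k np) := by
    have := hp.mul_right hm
    rwa [site_mul_same, sp_mul_sm] at this
  have hnm : Commute A (site k nm) := by
    have := hm.mul_right hp
    rwa [site_mul_same, sm_mul_sp] at this
  have hM : M = M 0 0 • np + (M 0 1 • sp + (M 1 0 • sm + M 1 1 • nm)) := by
    ext i j
    fin_cases i <;> fin_cases j <;>
      simp [np, sp, sm, nm, Matrix.add_apply, Matrix.smul_apply, smul_eq_mul]
  rw [hM, site_add, site_add, site_add, site_smul, site_smul, site_smul, site_smul]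
  exact (hnp.smul_right _).add_right
    ((hp.smul_right _).add_right ((hm.smul_right _).add_right (hnm.smul_right _)))

/-- The induction step: commutation propagates one site to the right. -/
lemma step_gen {A : Matrix (Spin N) (Spin N) ℂ} (hH : Commute A (HS N))
    (k : Fin N) (hk : (k : ℕ) + 1 < N)
    (IH : ∀ j : Fin N, (j : ℕ) ≤ (k : ℕ) → ∀ M, Commute A (site j M))
    (Z W : Matrix (Fin 2) (Fin 2) ℂ)
    (hid : ∀ a b c d : Fin 2,
      (sx * Z - Z * sx) a b * sx c d + (sy * Z - Z * sy) a b * sy c d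
        = sz a b * W c d) :
    Commute A (site (⟨(k : ℕ) + 1, hk⟩ : Fin N) W) := by
  set l₀ : Fin N := ⟨(k : ℕ) + 1, hk⟩ with hl₀
  have hkl : k ≠ l₀ := hl₀ ▸ Fin.ne_of_val_ne (show (k : ℕ) ≠ (k : ℕ) + 1 by omega)
  set C : Matrix (Spin N) (Spin N) ℂ := site k Z with hC0
  have hC : Commute A C := IH k le_rfl Z
  set S1 : Matrix (Spin N) (Spin N) ℂ := ∑ j : Fin N, site j sz with hS1
  set T : Fin N → Fin N → Matrix (Spin N) (Spin N) ℂ := fun j l =>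
    if (l : ℕ) = (j : ℕ) + 1 then site j sx * site l sx + site j sy * site l sy else 0 with hT
  have hHS : HS N = S1 + ∑ j : Fin N, ∑ l : Fin N, T j l := rfl
  have hcom : Commute A (HS N * C - C * HS N) := (hH.mul_right hC).sub_right (hC.mul_right hH)
  have hs1 : Commute A (S1 * C - C * S1) := by
    rw [hS1, Finset.sum_mul, Finset.mul_sum, ← Finset.sum_sub_distrib]
    refine Commute.sum_right _ _ _ fun j _ => ?_
    by_cases hj : j = k
    · subst hj
      rw [hC0, site_mul_same, site_mul_same, ← site_sub]
      exact IH j le_rfl _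
    · rw [hC0, site_comm hj, sub_self]
      exact Commute.zero_right A
  have hs2 : Commute A (∑ j : Fin N, ∑ l : Fin N, (T j l * C - C * T j l)) := by
    have e : ∑ j : Fin N, ∑ l : Fin N, (T j l * C - C * T j l)
        = (HS N * C - C * HS N) - (S1 * C - C * S1) := by
      rw [hHS]
      simp only [Finset.sum_sub_distrib, ← Finset.sum_mul, ← Finset.mul_sum]
      noncomm_ring
    rw [e]
    exact hcom.sub_right hs1
  set d : Fin N → Matrix (Spin N) (Spin N) ℂ := fun j => ∑ l : Fin N, (T j l * C - C * T j l)
    with hd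
  have hdne : ∀ j : Fin N, j ≠ k → Commute A (d j) := by
    intro j hj
    refine Commute.sum_right _ _ _ fun l _ => ?_
    by_cases hcond : (l : ℕ) = (j : ℕ) + 1
    · have hjl : j ≠ l := Fin.ne_of_val_ne (by omega)
      by_cases hlk : l = k
      · have hvk : (l : ℕ) = (k : ℕ) := congrArg Fin.val hlk
        have hjlek : (j : ℕ) ≤ (k : ℕ) := by omega
        have hllek : (l : ℕ) ≤ (k : ℕ) := by omega
        rw [hT]
        simp only [if_pos hcond]
        rw [hC0, ← hlk, add_mul, mul_add, add_sub_add_comm,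
          comm_one_two (Ne.symm hjl), comm_one_two (Ne.symm hjl)]
        exact ((IH j hjlek sx).mul_right (IH l hllek _)).add_right
          ((IH j hjlek sy).mul_right (IH l hllek _))
      · have hjk : j ≠ k := hj
        have e0 : T j l * C = C * T j l := by
          rw [hT]
          simp only [if_pos hcond]
          rw [hC0, add_mul, mul_add]
          congr 1
          · rw [mul_assoc, site_comm hlk, ← mul_assoc, site_comm hjk, mul_assoc]
          · rw [mul_assoc, site_comm hlk, ← mul_assoc, site_comm hjk, mul_assoc]
        rw [e0, sub_self]
        exact Commute.zero_right A
    · rw [hT]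
      simp only [if_neg hcond]
      rw [zero_mul, mul_zero, sub_self]
      exact Commute.zero_right A
  have hdk : d k = (site k sx * site l₀ sx + site k sy * site l₀ sy) * C
      - C * (site k sx * site l₀ sx + site k sy * site l₀ sy) := by
    rw [hd]
    show ∑ l : Fin N, (T k l * C - C * T k l) = _
    rw [Finset.sum_eq_single l₀]
    · show (if ((l₀ : ℕ) = (k : ℕ) + 1) then site k sx * site l₀ sx + site k sy * site l₀ sy else 0) * C
          - C * (if ((l₀ : ℕ) = (k : ℕ) + 1) then site k sx * site l₀ sx + site k sy * site l₀ sy else 0) = _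
      rw [if_pos (show (l₀ : ℕ) = (k : ℕ) + 1 from rfl)]
    · intro l _ hne
      have hcond : ¬ ((l : ℕ) = (k : ℕ) + 1) := fun hc => hne (Fin.ext hc)
      rw [hT]
      simp only [if_neg hcond]
      rw [zero_mul, mul_zero, sub_self]
    · intro h
      exact absurd (Finset.mem_univ l₀) h
  have hdkc : Commute A (d k) := by
    have hrest : Commute A (∑ j ∈ Finset.univ.erase k, d j) :=
      Commute.sum_right _ _ _ fun j hj => hdne j (Finset.mem_erase.1 hj).1
    have e : d k = (∑ j : Fin N, d j) - ∑ j ∈ Finset.univ.erase k, d j := by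
      rw [← Finset.add_sum_erase _ d (Finset.mem_univ k)]
      exact (add_sub_cancel_right _ _).symm
    rw [e]
    exact hs2.sub_right hrest
  rw [hdk, hC0, add_mul, mul_add, add_sub_add_comm, comm_two_one (Ne.symm hkl),
    comm_two_one (Ne.symm hkl), two_site_linear hkl _ _ _ _ sz W hid] at hdkc
  have h6 := (IH k le_rfl sz).mul_right hdkc
  rwa [← mul_assoc, site_mul_same, sz_mul_sz, site_one, one_mul] at h6

lemma commute_kron {A : Matrix (Spin N) (Spin N) ℂ}
    (hA : ∀ (j : Fin N) M, Commute A (site j M)) (f : Fin N → Matrix (Fin 2) (Fin 2) ℂ) :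
    Commute A (kron f) := by
  have main : ∀ s : Finset (Fin N), Commute A (kron fun j => if j ∈ s then f j else 1) := by
    intro s
    induction s using Finset.induction_on with
    | empty => simpa [kron_one] using Commute.one_right A
    | @insert a s hns ih =>
      have e : (kron fun j => if j ∈ insert a s then f j else 1)
          = site a (f a) * kron (fun j => if j ∈ s then f j else 1) := by
        rw [site_eq_kron, kron_mul]
        refine congrArg kron (funext fun j => ?_)
        by_cases hj : j = a
        · subst hj; simp [hns]
        · simp [hj]
      rw [e]
      exact (hA a (f a)).mul_right ih
  simpa using main Finset.univ

lemma kron_stdBasis (u v : Spin N) :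
    kron (fun j => Matrix.single (u j) (v j) (1 : ℂ)) = Matrix.single u v 1 := by
  ext x y
  rw [kron_apply]
  by_cases h : u = x ∧ v = y
  · obtain ⟨rfl, rfl⟩ := h
    simp [Matrix.single]
  · have h0 : Matrix.single u v (1 : ℂ) x y = 0 := by
      simp only [Matrix.single, Matrix.of_apply, ite_eq_right_iff]
      exact fun hc => absurd hc h
    rw [h0]
    rcases not_and_or.mp h with h' | h'
    · obtain ⟨j, hj⟩ := Function.ne_iff.mp h'
      exact Finset.prod_eq_zero (Finset.mem_univ j)
        (by simp only [Matrix.single, Matrix.of_apply]; rw [if_neg (by tauto)])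
    · obtain ⟨j, hj⟩ := Function.ne_iff.mp h'
      exact Finset.prod_eq_zero (Finset.mem_univ j)
        (by simp only [Matrix.single, Matrix.of_apply]; rw [if_neg (by tauto)])

end CommutantAux


/-- The commutant of `{H_S, σ₊^{(1)}, σ₋^{(1)}, σ₊^{(N)}, σ₋^{(N)}}` is trivial. -/
theorem commutant_trivial (N : ℕ) (hN : 2 ≤ N)
    (A : Matrix (Spin N) (Spin N) ℂ)
    (h1 : A * HS N = HS N * A)
    (h2 : A * site (⟨0, by omega⟩ : Fin N) sp = site (⟨0, by omega⟩ : Fin N) sp * A)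
    (h3 : A * site (⟨0, by omega⟩ : Fin N) sm = site (⟨0, by omega⟩ : Fin N) sm * A)
    (h4 : A * site (⟨N - 1, by omega⟩ : Fin N) sp = site (⟨N - 1, by omega⟩ : Fin N) sp * A)
    (h5 : A * site (⟨N - 1, by omega⟩ : Fin N) sm = site (⟨N - 1, by omega⟩ : Fin N) sm * A) :
    ∃ lam : ℂ, A = lam • (1 : Matrix (Spin N) (Spin N) ℂ) := by
  have key : ∀ n : ℕ, ∀ hn : n < N, ∀ M, Commute A (site (⟨n, hn⟩ : Fin N) M) := by
    intro n
    induction n using Nat.strong_induction_on with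
    | _ n ih =>
      intro hn
      match n, hn with
      | 0, hn => exact CommutantAux.commute_all h2 h3
      | (m+1), hn =>
        have hm : m < N := by omega
        have IH : ∀ j : Fin N, (j : ℕ) ≤ m → ∀ M, Commute A (site j M) := by
          intro j hj M'
          have h := ih (j : ℕ) (by omega) j.isLt M'
          simpa [Fin.eta] using h
        have hp' := CommutantAux.step_gen (A := A) h1 ⟨m, hm⟩ hn IH sp _ CommutantAux.hid_sp
        have hm' := CommutantAux.step_gen (A := A) h1 ⟨m, hm⟩ hn IH sm _ CommutantAux.hid_sm
        have hp : Commute A (site (⟨m + 1, hn⟩ : Fin N) sp) := by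
          rw [CommutantAux.site_smul] at hp'
          have h'' := hp'.smul_right ((-2 : ℂ)⁻¹)
          rwa [smul_smul, show ((-2 : ℂ)⁻¹ * (-2)) = 1 by norm_num, one_smul] at h''
        have hmm : Commute A (site (⟨m + 1, hn⟩ : Fin N) sm) := by
          rw [CommutantAux.site_smul] at hm'
          have h'' := hm'.smul_right ((2 : ℂ)⁻¹)
          rwa [smul_smul, show ((2 : ℂ)⁻¹ * 2) = 1 by norm_num, one_smul] at h''
        exact CommutantAux.commute_all hp hmm
  have hall : ∀ (j : Fin N) M, Commute A (site j M) := fun j M => by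
    have h := key (j : ℕ) j.isLt M
    simpa [Fin.eta] using h
  have hstd : Pairwise fun u v : Spin N => Commute (Matrix.single u v 1) A := by
    intro u v _
    have h := CommutantAux.commute_kron hall (fun j => Matrix.single (u j) (v j) 1)
    rw [CommutantAux.kron_stdBasis] at h
    exact h.symm
  obtain ⟨c, hc⟩ := Matrix.mem_range_scalar_of_commute_single hstd
  refine ⟨c, ?_⟩
  rw [← hc]
  ext x y
  by_cases h : x = y <;>
    simp [Matrix.scalar, Matrix.smul_apply, Matrix.one_apply, Matrix.diagonal_apply, h,
      smul_eq_mul]
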